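/- Let dA ≥ dB ≥ 2. Then there exists a blocked set of two product MUBs: two mutually unbiased orthonormal bases of EuclideanSpace ℂ (Fin dA × Fin dB), each of whose vectors is a product vector, such that no orthonormal basis of EuclideanSpace ℂ (Fin dA × Fin dB) consisting entirely of product vectors is mutually unbiased with both of them. -/

import Mathlib

open Complex Finset

/-- A product vector `(u ⊗ v)(a,b) = u(a)·v(b)` in `ℂ^{dA} ⊗ ℂ^{dB}`. -/
def IsProductVector {dA dB : ℕ} (ψ : EuclideanSpace ℂ (Fin dA × Fin dB)) : Prop :=
  ∃ (u : EuclideanSpace ℂ (Fin dA)) (v : EuclideanSpace ℂ (Fin dB)),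
    ∀ (a : Fin dA) (b : Fin dB), ψ (a, b) = u a * v b

/-- Two orthonormal bases of `ℂ^{dA} ⊗ ℂ^{dB}` are mutually unbiased. -/
def IsMUBPair {dA dB : ℕ}
    (e f : OrthonormalBasis (Fin dA × Fin dB) ℂ (EuclideanSpace ℂ (Fin dA × Fin dB))) :
    Prop :=
  ∀ v w : Fin dA × Fin dB,
    ‖(inner ℂ (e v) (f w) : ℂ)‖ ^ 2 = 1 / (dA * dB : ℝ)

noncomputable section BlockedMUBAux

/-- primitive d-th root of unity -/
def om (d : ℕ) : ℂ := Complex.exp ((2 * Real.pi / d : ℝ) * Complex.I)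

lemma om_eq (d : ℕ) : om d = Complex.exp (2 * Real.pi * Complex.I / d) := by
  unfold om; congr 1; push_cast; ring

lemma om_prim (d : ℕ) (hd : d ≠ 0) : IsPrimitiveRoot (om d) d := by
  rw [om_eq]; exact Complex.isPrimitiveRoot_exp d hd

lemma abs_om (d : ℕ) : ‖om d‖ = 1 := Complex.norm_exp_ofReal_mul_I _

lemma om_ne_zero (d : ℕ) : om d ≠ 0 := Complex.exp_ne_zero _

lemma conj_om_zpow (d : ℕ) (m : ℤ) : (starRingEnd ℂ) (om d ^ m) = om d ^ (-m) := by
  have h1 : (starRingEnd ℂ) (om d) = (om d)⁻¹ := by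
    rw [Complex.inv_def, Complex.normSq_eq_norm_sq, abs_om]
    simp
  rw [map_zpow₀, h1, inv_zpow, ← zpow_neg]

lemma sum_om_zpow (d : ℕ) (hd : d ≠ 0) (m : ℤ) :
    ∑ k : Fin d, om d ^ ((k : ℤ) * m) = if (d : ℤ) ∣ m then (d : ℂ) else 0 := by
  have hz : ∀ k : Fin d, om d ^ ((k : ℤ) * m) = (om d ^ m) ^ (k : ℕ) := by
    intro k
    rw [← zpow_natCast (om d ^ m) (k : ℕ), ← zpow_mul, mul_comm]
  simp_rw [hz]
  rw [Fin.sum_univ_eq_sum_range (fun k => (om d ^ m) ^ k)]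
  by_cases h : (d : ℤ) ∣ m
  · rw [if_pos h, ((om_prim d hd).zpow_eq_one_iff_dvd m).2 h]
    simp
  · rw [if_neg h]
    have hne : om d ^ m ≠ 1 := fun hc => h (((om_prim d hd).zpow_eq_one_iff_dvd m).1 hc)
    rw [geom_sum_eq hne]
    have hpow : (om d ^ m) ^ d = 1 := by
      rw [← zpow_natCast, ← zpow_mul, mul_comm, zpow_mul, zpow_natCast,
        (om_prim d hd).pow_eq_one, one_zpow]
    rw [hpow]
    simp


lemma fin_dvd_sub_iff {d : ℕ} (i i' : Fin d) :
    (d : ℤ) ∣ ((i' : ℤ) - (i : ℤ)) ↔ i = i' := by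
  have hi : (i : ℤ) < d := by exact_mod_cast i.isLt
  have hi' : (i' : ℤ) < d := by exact_mod_cast i'.isLt
  have hi0 : (0 : ℤ) ≤ i := by positivity
  have hi'0 : (0 : ℤ) ≤ i' := by positivity
  constructor
  · rintro ⟨q, hq⟩
    have hq0 : 0 ≤ q := by
      by_contra hc
      push_neg at hc
      have : (d : ℤ) * q ≤ (d : ℤ) * (-1) := by
        apply mul_le_mul_of_nonneg_left (by omega) (by positivity)
      linarith
    have hq1 : q ≤ 0 := by
      by_contra hc
      push_neg at hc
      have : (d : ℤ) * 1 ≤ (d : ℤ) * q := by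
        apply mul_le_mul_of_nonneg_left (by omega) (by positivity)
      linarith
    have : q = 0 := le_antisymm hq1 hq0
    subst this
    have : (i' : ℤ) = i := by linarith [hq]
    have : (i' : ℕ) = (i : ℕ) := by exact_mod_cast this
    exact (Fin.ext this).symm
  · rintro rfl
    simp

/-- successor in `Fin d`, cyclically -/
def nxt {d : ℕ} (hd : 0 < d) (b : Fin d) : Fin d :=
  ⟨((b : ℕ) + 1) % d, Nat.mod_lt _ hd⟩

lemma fin_dvd_nxt_iff {d : ℕ} (hd : 2 ≤ d) (b c : Fin d) :
    (d : ℤ) ∣ (1 + (b : ℤ) - (c : ℤ)) ↔ c = nxt (by omega) b := by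
  have hb : (b : ℤ) < d := by exact_mod_cast b.isLt
  have hc : (c : ℤ) < d := by exact_mod_cast c.isLt
  have hb0 : (0 : ℤ) ≤ b := by positivity
  have hc0 : (0 : ℤ) ≤ c := by positivity
  have hd' : (2 : ℤ) ≤ d := by exact_mod_cast hd
  constructor
  · rintro ⟨q, hq⟩
    have hq0 : 0 ≤ q := by
      by_contra hcon
      push_neg at hcon
      have : (d : ℤ) * q ≤ (d : ℤ) * (-1) := by
        apply mul_le_mul_of_nonneg_left (by omega) (by positivity)
      linarith
    have hq1 : q ≤ 1 := by
      by_contra hcon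
      push_neg at hcon
      have : (d : ℤ) * 2 ≤ (d : ℤ) * q := by
        apply mul_le_mul_of_nonneg_left (by omega) (by positivity)
      linarith
    apply Fin.ext
    show (c : ℕ) = ((b : ℕ) + 1) % d
    interval_cases q
    · have h1 : (c : ℤ) = (b : ℤ) + 1 := by linarith [hq]
      have h2 : (c : ℕ) = (b : ℕ) + 1 := by exact_mod_cast h1
      have h3 : (b : ℕ) + 1 < d := by omega
      rw [h2, Nat.mod_eq_of_lt h3]
    · have h1 : (c : ℤ) = 1 + (b : ℤ) - d := by linarith [hq]
      have h2 : (b : ℤ) = d - 1 := by omega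
      have h2' : (b : ℕ) = d - 1 := by omega
      have h3 : (c : ℕ) = 0 := by omega
      rw [h3, h2']
      rw [Nat.sub_add_cancel (by omega), Nat.mod_self]
  · rintro rfl
    show (d : ℤ) ∣ (1 + (b : ℤ) - (((b : ℕ) + 1) % d : ℕ))
    rcases Nat.lt_or_ge ((b : ℕ) + 1) d with h | h
    · rw [Nat.mod_eq_of_lt h]
      push_cast
      ring_nf
      simp
    · have hbd : (b : ℕ) + 1 = d := by omega
      rw [hbd, Nat.mod_self]
      push_cast
      have : 1 + (b : ℤ) - 0 = d := by omega
      rw [this]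


/-- the local phase on the B factor, depending on the A-side index j -/
def ph (dA dB : ℕ) (j : Fin dA) (b : Fin dB) : ℂ :=
  if (b : ℕ) = dB - 1 then Complex.I ^ (min (j : ℕ) 2) else 1

lemma abs_ph (dA dB : ℕ) (j : Fin dA) (b : Fin dB) : ‖ph dA dB j b‖ = 1 := by
  unfold ph
  split_ifs
  · rw [norm_pow, Complex.norm_I, one_pow]
  · simp

lemma conj_ph_mul (dA dB : ℕ) (j : Fin dA) (b : Fin dB) :
    (starRingEnd ℂ) (ph dA dB j b) * ph dA dB j b = 1 := by
  have := abs_ph dA dB j b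
  rw [mul_comm, Complex.mul_conj, Complex.normSq_eq_norm_sq, this]
  norm_num

def Fv (dA dB : ℕ) (jk : Fin dA × Fin dB) : EuclideanSpace ℂ (Fin dA × Fin dB) :=
  WithLp.toLp 2 fun p : Fin dA × Fin dB => om dA ^ ((((jk.1 : ℕ) * (p.1 : ℕ) : ℕ)) : ℤ) *
    (om dB ^ ((((jk.2 : ℕ) * (p.2 : ℕ) : ℕ)) : ℤ) * ph dA dB jk.1 p.2) /
    ((Real.sqrt (dA * dB) : ℝ) : ℂ)

lemma sum_prod_mul {dA dB : ℕ} (f : Fin dA → ℂ) (g : Fin dB → ℂ) :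
    ∑ p : Fin dA × Fin dB, f p.1 * g p.2 = (∑ a, f a) * (∑ b, g b) := by
  rw [Finset.sum_mul_sum, Fintype.sum_prod_type]

lemma abs_om' (d : ℕ) : ‖om d‖ = 1 := Complex.norm_exp_ofReal_mul_I _

lemma abs_Fv {dA dB : ℕ} (jk : Fin dA × Fin dB) (p : Fin dA × Fin dB) :
    ‖Fv dA dB jk p‖ = (Real.sqrt (dA * dB))⁻¹ := by
  unfold Fv
  rw [PiLp.toLp_apply]
  rw [norm_div, norm_mul, norm_mul, norm_zpow, norm_zpow, abs_om', abs_om', abs_ph]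
  rw [Complex.norm_real, Real.norm_of_nonneg (Real.sqrt_nonneg _)]
  simp

lemma inner_Fv {dA dB : ℕ} (u : Fin dA → ℂ) (v : Fin dB → ℂ)
    (ψ : EuclideanSpace ℂ (Fin dA × Fin dB)) (hψ : ∀ a b, ψ (a, b) = u a * v b)
    (j : Fin dA) (k : Fin dB) :
    (inner ℂ ψ (Fv dA dB (j, k)) : ℂ) =
      (∑ a : Fin dA, (starRingEnd ℂ) (u a) * om dA ^ ((((j : ℕ) * (a : ℕ) : ℕ)) : ℤ)) *
      (∑ b : Fin dB, (starRingEnd ℂ) (v b) *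
          (om dB ^ ((((k : ℕ) * (b : ℕ) : ℕ)) : ℤ) * ph dA dB j b)) /
      ((Real.sqrt (dA * dB) : ℝ) : ℂ) := by
  have hψ' : ∀ p : Fin dA × Fin dB, ψ p = u p.1 * v p.2 := by
    intro p; cases p; exact hψ _ _
  simp only [PiLp.inner_apply, RCLike.inner_apply']
  have step : ∀ p : Fin dA × Fin dB,
      (starRingEnd ℂ) (ψ p) * Fv dA dB (j, k) p =
      ((starRingEnd ℂ) (u p.1) * om dA ^ ((((j : ℕ) * (p.1 : ℕ) : ℕ)) : ℤ)) *
      (((starRingEnd ℂ) (v p.2) *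
          (om dB ^ ((((k : ℕ) * (p.2 : ℕ) : ℕ)) : ℤ) * ph dA dB j p.2)) /
        ((Real.sqrt (dA * dB) : ℝ) : ℂ)) := by
    intro p
    rw [hψ', map_mul]
    unfold Fv
    rw [PiLp.toLp_apply]
    ring
  rw [Finset.sum_congr rfl (fun p _ => step p)]
  rw [sum_prod_mul (fun a => (starRingEnd ℂ) (u a) * om dA ^ ((((j : ℕ) * (a : ℕ) : ℕ)) : ℤ))
    (fun b => (starRingEnd ℂ) (v b) *
      (om dB ^ ((((k : ℕ) * (b : ℕ) : ℕ)) : ℤ) * ph dA dB j b) / ((Real.sqrt (dA * dB) : ℝ) : ℂ))]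
  rw [← Finset.sum_div, mul_div_assoc]


lemma sqrt_mul_self' (dA dB : ℕ) :
    ((Real.sqrt (dA * dB) : ℝ) : ℂ) * ((Real.sqrt (dA * dB) : ℝ) : ℂ) = (dA : ℂ) * (dB : ℂ) := by
  rw [← Complex.ofReal_mul, Real.mul_self_sqrt (by positivity)]
  push_cast
  ring

lemma sqrt_ne_zero' {dA dB : ℕ} (hA : dA ≠ 0) (hB : dB ≠ 0) :
    ((Real.sqrt (dA * dB) : ℝ) : ℂ) ≠ 0 := by
  have : (0 : ℝ) < Real.sqrt (dA * dB) := by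
    apply Real.sqrt_pos.2
    have h1 : (1 : ℝ) ≤ (dA : ℝ) := by exact_mod_cast Nat.one_le_iff_ne_zero.2 hA
    have h2 : (1 : ℝ) ≤ (dB : ℝ) := by exact_mod_cast Nat.one_le_iff_ne_zero.2 hB
    nlinarith
  simp only [ne_eq, Complex.ofReal_eq_zero]
  linarith

lemma inner_FF {dA dB : ℕ} (hA : dA ≠ 0) (hB : dB ≠ 0) (jk j'k' : Fin dA × Fin dB) :
    (inner ℂ (Fv dA dB jk) (Fv dA dB j'k') : ℂ) = if jk = j'k' then 1 else 0 := by
  obtain ⟨j, k⟩ := jk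
  obtain ⟨j', k'⟩ := j'k'
  have hsne : ((Real.sqrt (dA * dB) : ℝ) : ℂ) ≠ 0 := sqrt_ne_zero' hA hB
  have hrw := inner_Fv (fun a => om dA ^ ((((j : ℕ) * (a : ℕ) : ℕ)) : ℤ))
      (fun b => om dB ^ ((((k : ℕ) * (b : ℕ) : ℕ)) : ℤ) * ph dA dB j b /
        ((Real.sqrt (dA * dB) : ℝ) : ℂ))
      (Fv dA dB (j, k)) (by intro a b; show Fv dA dB (j,k) (a,b) = _; unfold Fv; rw [PiLp.toLp_apply]; ring) j' k'
  rw [hrw]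
  have hSA : (∑ a : Fin dA, (starRingEnd ℂ) (om dA ^ ((((j : ℕ) * (a : ℕ) : ℕ)) : ℤ)) *
      om dA ^ ((((j' : ℕ) * (a : ℕ) : ℕ)) : ℤ)) = if j = j' then (dA : ℂ) else 0 := by
    have step : ∀ a : Fin dA, (starRingEnd ℂ) (om dA ^ ((((j : ℕ) * (a : ℕ) : ℕ)) : ℤ)) *
        om dA ^ ((((j' : ℕ) * (a : ℕ) : ℕ)) : ℤ) =
        om dA ^ ((a : ℤ) * ((j' : ℤ) - (j : ℤ))) := by
      intro a
      rw [conj_om_zpow, ← zpow_add₀ (om_ne_zero dA)]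
      congr 1
      push_cast
      ring
    rw [Finset.sum_congr rfl (fun a _ => step a), sum_om_zpow dA hA]
    by_cases h : j = j'
    · rw [if_pos ((fin_dvd_sub_iff j j').2 h), if_pos h]
    · rw [if_neg (fun hc => h ((fin_dvd_sub_iff j j').1 hc)), if_neg h]
  rw [hSA]
  by_cases hj : j = j'
  · subst hj
    have step : ∀ b : Fin dB, (starRingEnd ℂ)
        (om dB ^ ((((k : ℕ) * (b : ℕ) : ℕ)) : ℤ) * ph dA dB j b /
          ((Real.sqrt (dA * dB) : ℝ) : ℂ)) *
        (om dB ^ ((((k' : ℕ) * (b : ℕ) : ℕ)) : ℤ) * ph dA dB j b) =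
        om dB ^ ((b : ℤ) * ((k' : ℤ) - (k : ℤ))) / ((Real.sqrt (dA * dB) : ℝ) : ℂ) := by
      intro b
      rw [map_div₀, map_mul, conj_om_zpow, Complex.conj_ofReal]
      rw [div_mul_eq_mul_div]
      congr 1
      calc om dB ^ (-((((k : ℕ) * (b : ℕ) : ℕ)) : ℤ)) * (starRingEnd ℂ) (ph dA dB j b) *
            (om dB ^ ((((k' : ℕ) * (b : ℕ) : ℕ)) : ℤ) * ph dA dB j b)
          = (om dB ^ (-((((k : ℕ) * (b : ℕ) : ℕ)) : ℤ)) * om dB ^ ((((k' : ℕ) * (b : ℕ) : ℕ)) : ℤ)) *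
            ((starRingEnd ℂ) (ph dA dB j b) * ph dA dB j b) := by ring
        _ = om dB ^ ((b : ℤ) * ((k' : ℤ) - (k : ℤ))) := by
            rw [conj_ph_mul, mul_one, ← zpow_add₀ (om_ne_zero dB)]
            congr 1
            push_cast
            ring
    rw [Finset.sum_congr rfl (fun b _ => step b), ← Finset.sum_div, sum_om_zpow dB hB]
    have hdvd : ((dB : ℤ) ∣ ((k' : ℤ) - (k : ℤ))) ↔ k = k' := fin_dvd_sub_iff k k'
    by_cases hk : k = k'
    · subst hk
      rw [if_pos (hdvd.2 rfl), if_pos rfl, if_pos rfl]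
      have hABne : (dA : ℂ) * (dB : ℂ) ≠ 0 := by
        simp [hA, hB]
      have hrearr : (dA : ℂ) * ((dB : ℂ) / ((Real.sqrt (dA * dB) : ℝ) : ℂ)) /
          ((Real.sqrt (dA * dB) : ℝ) : ℂ) =
          ((dA : ℂ) * (dB : ℂ)) /
          (((Real.sqrt (dA * dB) : ℝ) : ℂ) * ((Real.sqrt (dA * dB) : ℝ) : ℂ)) := by
        ring
      rw [hrearr, sqrt_mul_self' dA dB, div_self hABne]
    · rw [if_neg (fun hc => hk (hdvd.1 hc)), if_neg (fun hc => hk (congrArg Prod.snd hc))]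
      simp
  · rw [if_neg hj, if_neg (fun hc => hj (congrArg Prod.fst hc))]
    simp

def SBf {dA dB : ℕ} (v : Fin dB → ℂ) (j : Fin dA) (k : Fin dB) : ℂ :=
  ∑ b : Fin dB, (starRingEnd ℂ) (v b) *
    (om dB ^ ((((k : ℕ) * (b : ℕ) : ℕ)) : ℤ) * ph dA dB j b)

def Wf {dA dB : ℕ} (v : Fin dB → ℂ) (j : Fin dA) (b c : Fin dB) : ℂ :=
  (starRingEnd ℂ) (v b) * ph dA dB j b * (v c * (starRingEnd ℂ) (ph dA dB j c))

lemma point_lemma {dA dB : ℕ} (hB : 2 ≤ dB) (v : Fin dB → ℂ) (j : Fin dA) (k : Fin dB) :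
    om dB ^ ((k : ℤ) * 1) * (SBf v j k * (starRingEnd ℂ) (SBf v j k)) =
    ∑ b : Fin dB, ∑ c : Fin dB,
      Wf v j b c * om dB ^ ((k : ℤ) * (1 + (b : ℤ) - (c : ℤ))) := by
  have hconjSB : (starRingEnd ℂ) (SBf v j k) =
      ∑ c : Fin dB, v c * (om dB ^ (-((((k : ℕ) * (c : ℕ) : ℕ)) : ℤ)) *
        (starRingEnd ℂ) (ph dA dB j c)) := by
    unfold SBf
    rw [map_sum]
    refine Finset.sum_congr rfl fun c _ => ?_
    rw [map_mul, map_mul, Complex.conj_conj, conj_om_zpow]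
  rw [hconjSB]
  unfold SBf
  rw [Finset.sum_mul_sum, Finset.mul_sum]
  refine Finset.sum_congr rfl fun b _ => ?_
  rw [Finset.mul_sum]
  refine Finset.sum_congr rfl fun c _ => ?_
  rw [show (k : ℤ) * (1 + (b : ℤ) - (c : ℤ)) =
    (k : ℤ) * 1 + ((((k : ℕ) * (b : ℕ) : ℕ)) : ℤ) + (-((((k : ℕ) * (c : ℕ) : ℕ)) : ℤ)) from by
      push_cast; ring]
  rw [zpow_add₀ (om_ne_zero dB), zpow_add₀ (om_ne_zero dB)]
  unfold Wf
  ring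

lemma sum_W_eq {dA dB : ℕ} (hB : 2 ≤ dB) (v : Fin dB → ℂ) (j : Fin dA) :
    ∑ k : Fin dB, om dB ^ ((k : ℤ) * 1) * (SBf v j k * (starRingEnd ℂ) (SBf v j k)) =
    (dB : ℂ) * ∑ b : Fin dB, Wf v j b (nxt (by omega) b) := by
  rw [Finset.sum_congr rfl fun k _ => point_lemma hB v j k]
  rw [Finset.sum_comm]
  have inner_step : ∀ b : Fin dB,
      (∑ k : Fin dB, ∑ c : Fin dB, Wf v j b c * om dB ^ ((k : ℤ) * (1 + (b : ℤ) - (c : ℤ)))) =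
      Wf v j b (nxt (by omega : 0 < dB) b) * dB := by
    intro b
    rw [Finset.sum_comm]
    have hc : ∀ c : Fin dB,
        (∑ k : Fin dB, Wf v j b c * om dB ^ ((k : ℤ) * (1 + (b : ℤ) - (c : ℤ)))) =
        if c = nxt (by omega : 0 < dB) b then Wf v j b c * dB else 0 := by
      intro c
      rw [← Finset.mul_sum, sum_om_zpow dB (by omega)]
      by_cases hdc : c = nxt (by omega : 0 < dB) b
      · rw [if_pos ((fin_dvd_nxt_iff hB b c).2 hdc), if_pos hdc]
      · rw [if_neg (fun hdvd => hdc ((fin_dvd_nxt_iff hB b c).1 hdvd)), if_neg hdc, mul_zero]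
    rw [Finset.sum_congr rfl fun c _ => hc c]
    rw [Finset.sum_ite_eq' Finset.univ (nxt (by omega : 0 < dB) b)
      (fun c => Wf v j b c * dB)]
    rw [if_pos (Finset.mem_univ _)]
  rw [Finset.sum_congr rfl fun b _ => inner_step b]
  rw [← Finset.sum_mul]
  ring

theorem blocked {dA dB : ℕ} (hB : 2 ≤ dB) (hAB : dB ≤ dA)
    (SA : Fin dA → ℂ) (v : Fin dB → ℂ) (hv : ∀ b, v b ≠ 0)
    (h2 : ∀ j k, (‖SA j‖) ^ 2 * (‖SBf v j k‖) ^ 2 = 1) : False := by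
  have hA : 2 ≤ dA := le_trans hB hAB
  have hBpos : 0 < dB := by omega
  -- step 1 : SB j k * conj (SB j k) is independent of k
  have h3 : ∀ j k, SBf v j k * (starRingEnd ℂ) (SBf v j k) =
      ((((‖SA j‖) ^ 2)⁻¹ : ℝ) : ℂ) := by
    intro j k
    have h2' := h2 j k
    have hSAne : (‖SA j‖) ^ 2 ≠ 0 := by
      intro hc
      rw [hc, zero_mul] at h2'
      exact zero_ne_one h2'
    have hr : (‖SBf v j k‖) ^ 2 = ((‖SA j‖) ^ 2)⁻¹ := by
      field_simp
      rw [eq_div_iff hSAne]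
      linarith [h2 j k]
    rw [Complex.mul_conj, Complex.normSq_eq_norm_sq, hr]
  -- step 2 : for every j the cyclic autocorrelation vanishes
  have hE : ∀ j : Fin dA, ∑ b : Fin dB, Wf v j b (nxt hBpos b) = 0 := by
    intro j
    have hsum0 : ∑ k : Fin dB, om dB ^ ((k : ℤ) * 1) *
        (SBf v j k * (starRingEnd ℂ) (SBf v j k)) = 0 := by
      rw [Finset.sum_congr rfl fun k _ => by rw [h3 j k]]
      rw [← Finset.sum_mul, sum_om_zpow dB (by omega)]
      rw [if_neg (fun hdvd => by
        have h1 := Int.le_of_dvd one_pos hdvd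
        omega)]
      rw [zero_mul]
    rw [sum_W_eq hB v j] at hsum0
    rcases mul_eq_zero.1 hsum0 with h | h
    · exact absurd h (by
        simp only [ne_eq, Nat.cast_eq_zero]
        omega)
    · exact h
  -- step 3 : the final algebra
  have hBval : ∀ b : Fin dB, (b : ℕ) < dB := fun b => b.isLt
  set lastB : Fin dB := ⟨dB - 1, by omega⟩ with hlastB
  set l1 : Fin dB := ⟨dB - 2, by omega⟩ with hl1
  set t : Fin dB → ℂ := fun b => (starRingEnd ℂ) (v b) * v (nxt hBpos b) with ht
  have hneq : l1 ≠ lastB := by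
    rw [hl1, hlastB, ne_eq, Fin.mk.injEq]
    omega
  have hph0 : ∀ b : Fin dB, ph dA dB (⟨0, by omega⟩ : Fin dA) b = 1 := by
    intro b
    unfold ph
    norm_num
  have hW0 : ∀ b, Wf v (⟨0, by omega⟩ : Fin dA) b (nxt hBpos b) = t b := by
    intro b
    unfold Wf
    rw [hph0, hph0, ht]
    simp
  have hsumt : ∑ b : Fin dB, t b = 0 := by
    rw [← Finset.sum_congr rfl fun b _ => hW0 b]
    exact hE ⟨0, by omega⟩
  have hph_last : ∀ j : Fin dA, ph dA dB j lastB = Complex.I ^ (min (j : ℕ) 2) :=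
    fun j => if_pos rfl
  have hval_nxt_last : ((nxt hBpos lastB : Fin dB) : ℕ) = 0 := by
    show ((dB - 1) + 1) % dB = 0
    rw [Nat.sub_add_cancel (by omega), Nat.mod_self]
  have hval_nxt_l1 : ((nxt hBpos l1 : Fin dB) : ℕ) = dB - 1 := by
    show ((dB - 2) + 1) % dB = dB - 1
    rw [show (dB - 2) + 1 = dB - 1 from by omega, Nat.mod_eq_of_lt (by omega)]
  have hph_other : ∀ (j : Fin dA) (b : Fin dB), (b : ℕ) ≠ dB - 1 → ph dA dB j b = 1 :=
    fun j b hb => if_neg hb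
  have hkey : ∀ j : Fin dA,
      t lastB * (Complex.I ^ (min (j : ℕ) 2) - 1) +
      t l1 * ((starRingEnd ℂ) (Complex.I ^ (min (j : ℕ) 2)) - 1) = 0 := by
    intro j
    have hvan : ∀ b ∈ Finset.univ, b ∉ ({l1, lastB} : Finset (Fin dB)) →
        Wf v j b (nxt hBpos b) - t b = 0 := by
      intro b _ hb
      simp only [Finset.mem_insert, Finset.mem_singleton] at hb
      push_neg at hb
      obtain ⟨hb1, hb2⟩ := hb
      have hbv1 : (b : ℕ) ≠ dB - 2 := fun hc => hb1 (by rw [hl1]; exact Fin.ext hc)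
      have hbv2 : (b : ℕ) ≠ dB - 1 := fun hc => hb2 (by rw [hlastB]; exact Fin.ext hc)
      have hnv : ((nxt hBpos b : Fin dB) : ℕ) = (b : ℕ) + 1 := by
        show ((b : ℕ) + 1) % dB = (b : ℕ) + 1
        apply Nat.mod_eq_of_lt
        have := hBval b
        omega
      have hp1 : ph dA dB j b = 1 := hph_other j b hbv2
      have hp2 : ph dA dB j (nxt hBpos b) = 1 := by
        apply hph_other
        rw [hnv]
        have := hBval b
        omega
      unfold Wf
      rw [hp1, hp2, ht]
      simp
    have hterm_last : Wf v j lastB (nxt hBpos lastB) - t lastB =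
        t lastB * (Complex.I ^ (min (j : ℕ) 2) - 1) := by
      unfold Wf
      rw [hph_last j, hph_other j _ (by rw [hval_nxt_last]; omega), ht]
      simp only [map_one]
      ring
    have hterm_l1 : Wf v j l1 (nxt hBpos l1) - t l1 =
        t l1 * ((starRingEnd ℂ) (Complex.I ^ (min (j : ℕ) 2)) - 1) := by
      unfold Wf
      rw [hph_other j l1 (by rw [hl1]; show dB - 2 ≠ dB - 1; omega)]
      rw [show ph dA dB j (nxt hBpos l1) = Complex.I ^ (min (j : ℕ) 2) from if_pos hval_nxt_l1]
      rw [ht]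
      simp only [map_one]
      ring
    have hdiff : ∑ b : Fin dB, (Wf v j b (nxt hBpos b) - t b) =
        t lastB * (Complex.I ^ (min (j : ℕ) 2) - 1) +
        t l1 * ((starRingEnd ℂ) (Complex.I ^ (min (j : ℕ) 2)) - 1) := by
      rw [← Finset.sum_subset (Finset.subset_univ ({l1, lastB} : Finset (Fin dB))) hvan]
      rw [Finset.sum_pair hneq, hterm_last, hterm_l1]
      ring
    rw [Finset.sum_sub_distrib, hE j, hsumt] at hdiff
    linear_combination -hdiff
  have hsum2 : t lastB + t l1 = 0 := by
    by_cases hd3 : 3 ≤ dB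
    · have hk2 := hkey ⟨2, by omega⟩
      have hmin : min ((⟨2, by omega⟩ : Fin dA) : ℕ) 2 = 2 := by norm_num
      rw [hmin, Complex.I_sq] at hk2
      simp only [map_neg, map_one] at hk2
      linear_combination (-(1 : ℂ)/2) * hk2
    · have hd2 : dB = 2 := by omega
      have huniv : (Finset.univ : Finset (Fin dB)) = {l1, lastB} := by
        symm
        apply Finset.eq_univ_of_card
        rw [Finset.card_pair hneq, Fintype.card_fin, hd2]
      rw [huniv, Finset.sum_pair hneq] at hsumt
      linear_combination hsumt
  have hk1 := hkey ⟨1, by omega⟩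
  have hmin1 : min ((⟨1, by omega⟩ : Fin dA) : ℕ) 2 = 1 := by norm_num
  rw [hmin1, pow_one, Complex.conj_I] at hk1
  have htl : t lastB = 0 := by
    have h5 : t l1 = -t lastB := by linear_combination hsum2
    rw [h5] at hk1
    have h6 : t lastB * (2 * Complex.I) = 0 := by linear_combination hk1
    rcases mul_eq_zero.1 h6 with h | h
    · exact h
    · exact absurd h (by simp [Complex.I_ne_zero])
  rw [ht] at htl
  simp only at htl
  rcases mul_eq_zero.1 htl with h | h
  · exact hv lastB (by rwa [map_eq_zero] at h)
  · exact hv _ h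


end BlockedMUBAux

/-- For `dA ≥ dB ≥ 2` there exists a blocked set of two product MUBs: two mutually
unbiased orthonormal bases consisting of product vectors such that no orthonormal basis
consisting entirely of product vectors is mutually unbiased with both of them. -/
theorem exists_blocked_pair_of_product_mubs (dA dB : ℕ) (hB : 2 ≤ dB) (hAB : dB ≤ dA) :
    ∃ e f : OrthonormalBasis (Fin dA × Fin dB) ℂ (EuclideanSpace ℂ (Fin dA × Fin dB)),
      (∀ v, IsProductVector (e v)) ∧
      (∀ v, IsProductVector (f v)) ∧
      IsMUBPair e f ∧
      ∀ g : OrthonormalBasis (Fin dA × Fin dB) ℂ (EuclideanSpace ℂ (Fin dA × Fin dB)),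
        (∀ v, IsProductVector (g v)) → ¬(IsMUBPair g e ∧ IsMUBPair g f) := by
  have hA : 2 ≤ dA := le_trans hB hAB
  have hA0 : dA ≠ 0 := by omega
  have hB0 : dB ≠ 0 := by omega
  have hposAB : (0 : ℝ) < (dA : ℝ) * dB := by
    have h2' : (2 : ℝ) ≤ (dA : ℝ) := by exact_mod_cast hA
    have h3' : (2 : ℝ) ≤ (dB : ℝ) := by exact_mod_cast hB
    nlinarith
  have honF : Orthonormal ℂ (Fv dA dB) := orthonormal_iff_ite.2 (inner_FF hA0 hB0)
  have hspan : ⊤ ≤ Submodule.span ℂ (Set.range (Fv dA dB)) :=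
    (honF.linearIndependent.span_eq_top_of_card_eq_finrank'
      (by simp [finrank_euclideanSpace])).ge
  refine ⟨EuclideanSpace.basisFun _ ℂ, OrthonormalBasis.mk honF hspan, ?_, ?_, ?_, ?_⟩
  · -- e consists of product vectors
    rintro ⟨a0, b0⟩
    refine ⟨WithLp.toLp 2 fun a => if a = a0 then (1 : ℂ) else 0, WithLp.toLp 2 fun b => if b = b0 then (1 : ℂ) else 0, ?_⟩
    intro a b
    rw [EuclideanSpace.basisFun_apply]
    show EuclideanSpace.single (a0, b0) 1 (a, b) = _
    rw [EuclideanSpace.single_apply]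
    by_cases h1 : a = a0 <;> by_cases h2 : b = b0 <;> simp [h1, h2, Prod.ext_iff]
  · -- f consists of product vectors
    rintro ⟨j, k⟩
    refine ⟨WithLp.toLp 2 fun a : Fin dA => om dA ^ ((((j : ℕ) * (a : ℕ) : ℕ)) : ℤ),
      WithLp.toLp 2 fun b : Fin dB => om dB ^ ((((k : ℕ) * (b : ℕ) : ℕ)) : ℤ) * ph dA dB j b /
        ((Real.sqrt (dA * dB) : ℝ) : ℂ), ?_⟩
    intro a b
    rw [OrthonormalBasis.coe_mk]
    show Fv dA dB (j, k) (a, b) = _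
    unfold Fv
    simp only [PiLp.toLp_apply]
    ring
  · -- e and f are mutually unbiased
    intro vv ww
    rw [EuclideanSpace.basisFun_apply, OrthonormalBasis.coe_mk,
      EuclideanSpace.inner_single_left, map_one, one_mul, abs_Fv,
      inv_pow, Real.sq_sqrt (by positivity), one_div]
  · -- no product basis is unbiased to both e and f
    rintro g hgprod ⟨hge, hgf⟩
    obtain ⟨u, v, huv⟩ := hgprod (⟨0, by omega⟩, ⟨0, by omega⟩)
    have h1 : ∀ a b, ‖u a * v b‖ ^ 2 = 1 / ((dA : ℝ) * dB) := by
      intro a b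
      have hh := hge (⟨0, by omega⟩, ⟨0, by omega⟩) (a, b)
      rw [EuclideanSpace.basisFun_apply, EuclideanSpace.inner_single_right, one_mul,
        Complex.norm_conj] at hh
      rw [← huv a b]
      exact hh
    have hv : ∀ b, v b ≠ 0 := by
      intro b hb
      have hcontr := h1 ⟨0, by omega⟩ b
      rw [hb, mul_zero, norm_zero] at hcontr
      have hgt : (0 : ℝ) < 1 / ((dA : ℝ) * dB) := div_pos one_pos hposAB
      rw [← hcontr] at hgt
      norm_num at hgt
    have h2 : ∀ (j : Fin dA) (k : Fin dB),
        (‖(fun j' : Fin dA => ∑ a : Fin dA, (starRingEnd ℂ) (u a) *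
          om dA ^ ((((j' : ℕ) * (a : ℕ) : ℕ)) : ℤ)) j‖) ^ 2 *
        (‖SBf v j k‖) ^ 2 = 1 := by
      intro j k
      have hm := hgf (⟨0, by omega⟩, ⟨0, by omega⟩) (j, k)
      rw [OrthonormalBasis.coe_mk] at hm
      rw [inner_Fv u v _ huv j k] at hm
      rw [norm_div, norm_mul, Complex.norm_real,
        Real.norm_of_nonneg (Real.sqrt_nonneg _)] at hm
      rw [div_pow, mul_pow, Real.sq_sqrt (by positivity)] at hm
      have hne : ((dA : ℝ) * dB) ≠ 0 := ne_of_gt hposAB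
      rw [div_eq_div_iff hne hne] at hm
      have hm2 : ‖∑ a : Fin dA, (starRingEnd ℂ) (u a) *
            om dA ^ ((((j : ℕ) * (a : ℕ) : ℕ)) : ℤ)‖ ^ 2 *
          ‖∑ b : Fin dB, (starRingEnd ℂ) (v b) *
            (om dB ^ ((((k : ℕ) * (b : ℕ) : ℕ)) : ℤ) * ph dA dB j b)‖ ^ 2 = 1 :=
        mul_right_cancel₀ hne (by linarith [hm])
      unfold SBf
      exact hm2
    exact blocked hB hAB _ v hv h2
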